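/- Let J be a closed two-sided ideal in a C*-algebra B and let A be a C*-subalgebra of B. If there exists γ < 1 such that for every x ∈ A there is y ∈ J with ‖x − y‖ ≤ γ‖x‖, then A ⊆ J. -/

import Mathlib

open scoped ContinuousMapZero

local notation "σₙ" => quasispectrum

/-- `cfcₙ` of an element of a closed non-unital star subalgebra stays in the subalgebra. -/
lemma cfcn_mem_of_isClosed {B : Type*} [NonUnitalCStarAlgebra B]
    (A : NonUnitalStarSubalgebra ℂ B) (hA : IsClosed (A : Set B))
    {a : B} (haA : a ∈ A) (f : ℝ → ℝ) : cfcₙ f a ∈ A := by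
  by_cases ha : IsSelfAdjoint a
  case neg => rw [cfcₙ_apply_of_not_predicate a ha]; exact A.zero_mem
  by_cases hf : ContinuousOn f (σₙ ℝ a)
  case neg => rw [cfcₙ_apply_of_not_continuousOn a hf]; exact A.zero_mem
  by_cases hf0 : f 0 = 0
  case neg => rw [cfcₙ_apply_of_not_map_zero a hf0]; exact A.zero_mem
  rw [cfcₙ_apply f a]
  have hid : cfcₙHom ha (ContinuousMapZero.id (σₙ ℝ a)) = a :=
    cfcₙHom_id ha
  set g : C(σₙ ℝ a, ℝ)₀ := ⟨⟨_, hf.restrict⟩, hf0⟩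
  generalize g = g'
  induction g' using ContinuousMapZero.induction_on_of_compact with
  | zero => rw [map_zero]; exact A.zero_mem
  | id => rwa [hid]
  | star_id => rw [map_star, hid]; exact star_mem haA
  | add p q hp hq => rw [map_add]; exact A.add_mem hp hq
  | mul p q hp hq => rw [map_mul]; exact A.mul_mem hp hq
  | smul r p hp =>
      rw [map_smul]
      have h2 : (r : ℂ) • cfcₙHom ha p = r • cfcₙHom ha p := Complex.coe_smul r _
      rw [← h2]
      exact SMulMemClass.smul_mem _ hp
  | frequently p hp =>
      have hcl : IsClosed {q : C(σₙ ℝ a, ℝ)₀ | cfcₙHom ha q ∈ A} :=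
        hA.preimage (cfcₙHom_isClosedEmbedding ha).continuous
      have h3 : p ∈ closure {q : C(σₙ ℝ a, ℝ)₀ | cfcₙHom ha q ∈ A} :=
        mem_closure_iff_frequently.mpr hp
      rw [hcl.closure_eq] at h3
      exact h3

open Metric Filter

/-- If `J` is a closed two-sided ideal in a C*-algebra `B`, `A` is a (closed) C*-subalgebra
of `B`, and `A` is nearly contained in `J` with constant `γ < 1`, then `A ⊆ J`. -/
theorem stmt_0 {B : Type*} [NonUnitalCStarAlgebra B]
    (A : NonUnitalStarSubalgebra ℂ B) (hA : IsClosed (A : Set B))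
    (J : TwoSidedIdeal B) (hJ : IsClosed (J : Set B))
    (γ : ℝ) (hγ : γ < 1)
    (hnear : ∀ x ∈ A, ∃ y ∈ J, ‖x - y‖ ≤ γ * ‖x‖) :
    ∀ x ∈ A, x ∈ J := by
  set D : B → ℝ := fun x => infDist x (J : Set B) with hD
  have hJne : (J : Set B).Nonempty := ⟨0, J.zero_mem⟩
  have hmemD : ∀ z : B, D z = 0 → z ∈ J := by
    intro z hz
    have := (mem_closure_iff_infDist_zero hJne).mpr hz
    rwa [hJ.closure_eq] at this
  have hDle : ∀ z y : B, y ∈ J → D z ≤ ‖z - y‖ := by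
    intro z y hy
    simpa [dist_eq_norm] using infDist_le_dist_of_mem (x := z) hy
  have hDnonneg : ∀ z : B, 0 ≤ D z := fun z => infDist_nonneg
  -- submultiplicativity of the distance to the ideal
  have hDmul : ∀ z w : B, D (z * w) ≤ D z * D w := by
    intro z w
    have h : ∀ ε > (0:ℝ), D (z * w) ≤ (D z + ε) * (D w + ε) := by
      intro ε hε
      obtain ⟨j, hjJ, hj⟩ := (infDist_lt_iff hJne).mp
        (lt_add_of_pos_right (D z) hε)
      obtain ⟨k, hkJ, hk⟩ := (infDist_lt_iff hJne).mp
        (lt_add_of_pos_right (D w) hε)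
      rw [dist_eq_norm] at hj hk
      have hmem : z * k + j * w - j * k ∈ J :=
        J.sub_mem (J.add_mem (J.mul_mem_left _ _ hkJ) (J.mul_mem_right _ _ hjJ))
          (J.mul_mem_left _ _ hkJ)
      calc D (z * w) ≤ ‖z * w - (z * k + j * w - j * k)‖ := hDle _ _ hmem
        _ = ‖(z - j) * (w - k)‖ := by congr 1; noncomm_ring
        _ ≤ ‖z - j‖ * ‖w - k‖ := norm_mul_le _ _
        _ ≤ (D z + ε) * (D w + ε) := by
            apply mul_le_mul hj.le hk.le (norm_nonneg _)
            have := hDnonneg z; linarith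
    have hlim : Tendsto (fun ε : ℝ => (D z + ε) * (D w + ε)) (nhdsWithin 0 (Set.Ioi 0))
        (nhds (D z * D w)) := by
      have hc : ContinuousAt (fun ε : ℝ => (D z + ε) * (D w + ε)) 0 := by fun_prop
      have h4 : Tendsto (fun ε : ℝ => (D z + ε) * (D w + ε)) (nhdsWithin 0 (Set.Ioi 0))
          (nhds ((D z + 0) * (D w + 0))) := hc.continuousWithinAt
      rw [add_zero, add_zero] at h4
      exact h4
    exact ge_of_tendsto hlim (eventually_of_mem self_mem_nhdsWithin fun ε hε => h ε hε)
  set γ' : ℝ := max γ 0 with hγ'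
  have hγ'0 : 0 ≤ γ' := le_max_right _ _
  have hγ'1 : γ' < 1 := max_lt hγ one_pos
  have hAD : ∀ x ∈ A, D x ≤ γ' * ‖x‖ := by
    intro x hx
    obtain ⟨y, hyJ, hy⟩ := hnear x hx
    refine (hDle x y hyJ).trans (hy.trans ?_)
    exact mul_le_mul_of_nonneg_right (le_max_left _ _) (norm_nonneg x)
  -- key iteration with square roots
  have key : ∀ k : ℕ, ∀ b : B, b ∈ A → IsSelfAdjoint b → (∀ t ∈ σₙ ℝ b, (0:ℝ) ≤ t) →
      D b ≤ γ' ^ (2 ^ k) * ‖b‖ := by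
    intro k
    induction k with
    | zero => intro b hbA _ _; simpa using hAD b hbA
    | succ k ih =>
      intro b hbA hbsa hbq
      set s : B := cfcₙ Real.sqrt b with hs
      have hsA : s ∈ A := cfcn_mem_of_isClosed A hA hbA _
      have hssa : IsSelfAdjoint s := cfcₙ_predicate Real.sqrt b
      have hsq : ∀ t ∈ σₙ ℝ s, (0:ℝ) ≤ t := by
        intro t ht
        rw [hs, cfcₙ_map_quasispectrum Real.sqrt b (by fun_prop) Real.sqrt_zero hbsa] at ht
        obtain ⟨u, -, rfl⟩ := ht
        exact Real.sqrt_nonneg u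
      have hss : s * s = b := by
        rw [hs, ← cfcₙ_mul Real.sqrt Real.sqrt b (by fun_prop) Real.sqrt_zero
          (by fun_prop) Real.sqrt_zero]
        calc cfcₙ (fun t => Real.sqrt t * Real.sqrt t) b
            = cfcₙ (id : ℝ → ℝ) b := by
              apply cfcₙ_congr
              intro t ht
              exact Real.mul_self_sqrt (hbq t ht)
          _ = b := cfcₙ_id ℝ b
      have hnorms : ‖s‖ * ‖s‖ = ‖b‖ := by
        have h5 := CStarRing.norm_star_mul_self (x := s)
        rw [hssa.star_eq] at h5
        rw [← hss, ← h5]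
      calc D b = D (s * s) := by rw [hss]
        _ ≤ D s * D s := hDmul s s
        _ ≤ (γ' ^ (2 ^ k) * ‖s‖) * (γ' ^ (2 ^ k) * ‖s‖) := by
            apply mul_le_mul (ih s hsA hssa hsq) (ih s hsA hssa hsq) (hDnonneg s)
            positivity
        _ = γ' ^ (2 ^ (k+1)) * ‖b‖ := by
            rw [← hnorms, pow_succ, pow_mul]
            ring
  -- positive elements of A are in J
  have posJ : ∀ b : B, b ∈ A → IsSelfAdjoint b → (∀ t ∈ σₙ ℝ b, (0:ℝ) ≤ t) → b ∈ J := by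
    intro b hbA hbsa hbq
    apply hmemD
    refine le_antisymm ?_ (hDnonneg b)
    have h1 : ∀ k : ℕ, D b ≤ γ' ^ k * ‖b‖ := by
      intro k
      refine (key k b hbA hbsa hbq).trans ?_
      exact mul_le_mul_of_nonneg_right
        (pow_le_pow_of_le_one hγ'0 hγ'1.le (Nat.lt_two_pow_self (n := k)).le) (norm_nonneg b)
    have hlim : Tendsto (fun k : ℕ => γ' ^ k * ‖b‖) atTop (nhds 0) := by
      have := (tendsto_pow_atTop_nhds_zero_of_lt_one hγ'0 hγ'1).mul_const ‖b‖
      simpa using this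
    exact ge_of_tendsto' hlim h1
  -- final step: general elements
  intro x hx
  set b : B := star x * x with hb
  have hbA : b ∈ A := mul_mem (star_mem hx) hx
  have hbsa : IsSelfAdjoint b := IsSelfAdjoint.star_mul_self x
  have hbq : ∀ t ∈ σₙ ℝ b, (0:ℝ) ≤ t := by
    intro t ht
    rw [Unitization.quasispectrum_eq_spectrum_inr' ℝ ℂ b] at ht
    have h7 : (b : Unitization ℂ B) = star (x : Unitization ℂ B) * (x : Unitization ℂ B) := by
      rw [hb, Unitization.inr_mul, Unitization.inr_star]
    rw [h7] at ht
    exact spectrum_star_mul_self_nonneg t ht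
  have hDx2 : ∀ ε > (0:ℝ), D x ^ 2 ≤ ε := by
    intro ε hε
    set f : ℝ → ℝ := fun t => min (t / ε) 1 with hf
    have hfc : Continuous f := by fun_prop
    have hf0 : f 0 = 0 := by simp [hf]
    set s : B := cfcₙ f b with hs
    have hsA : s ∈ A := cfcn_mem_of_isClosed A hA hbA f
    have hssa : IsSelfAdjoint s := cfcₙ_predicate f b
    have hsq : ∀ t ∈ σₙ ℝ s, (0:ℝ) ≤ t := by
      intro t ht
      rw [hs, cfcₙ_map_quasispectrum f b hfc.continuousOn hf0 hbsa] at ht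
      obtain ⟨u, hu, rfl⟩ := ht
      exact le_min (div_nonneg (hbq u hu) hε.le) zero_le_one
    have hsJ : s ∈ J := posJ s hsA hssa hsq
    have hxsJ : x * s ∈ J := J.mul_mem_left x s hsJ
    have hDxle : D x ≤ ‖x - x * s‖ := hDle _ _ hxsJ
    have hexp : star (x - x * s) * (x - x * s) = b - b * s - s * b + s * (b * s) := by
      rw [star_sub, star_mul, hssa.star_eq, hb]
      noncomm_ring
    have hid : cfcₙ (fun t : ℝ => t) b = b := cfcₙ_id' ℝ b
    have hmul1 : cfcₙ (fun t : ℝ => t * f t) b = b * s := by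
      rw [cfcₙ_mul _ _ b (by fun_prop) rfl hfc.continuousOn hf0]
      rw [hid]
    have hmul2 : cfcₙ (fun t : ℝ => f t * t) b = s * b := by
      rw [cfcₙ_mul _ _ b hfc.continuousOn hf0 (by fun_prop) rfl]
      rw [hid]
    have hmul3 : cfcₙ (fun t : ℝ => f t * (t * f t)) b = s * (b * s) := by
      rw [cfcₙ_mul _ _ b hfc.continuousOn hf0 (by fun_prop) (by simp [hf0])]
      rw [hmul1]
    have hcfc : cfcₙ (fun t : ℝ => t - t * f t - f t * t + f t * (t * f t)) b
        = b - b * s - s * b + s * (b * s) := by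
      rw [cfcₙ_add _ _ b (by fun_prop) (by simp [hf0]) (by fun_prop) (by simp [hf0])]
      rw [cfcₙ_sub _ _ b (by fun_prop) (by simp [hf0]) (by fun_prop) (by simp [hf0])]
      rw [cfcₙ_sub _ _ b (by fun_prop) rfl (by fun_prop) (by simp [hf0])]
      rw [hid, hmul1, hmul2, hmul3]
    have hbound : ‖star (x - x * s) * (x - x * s)‖ ≤ ε := by
      rw [hexp, ← hcfc]
      apply norm_cfcₙ_le
      intro t ht
      have ht0 : (0:ℝ) ≤ t := hbq t ht
      have hkey : t - t * f t - f t * t + f t * (t * f t) = t * (1 - f t) ^ 2 := by ring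
      rw [hkey, Real.norm_eq_abs]
      rcases le_or_gt t ε with hc | hc
      · have hm1 : f t ≤ 1 := min_le_right _ _
        have hm0 : (0:ℝ) ≤ f t := le_min (div_nonneg ht0 hε.le) zero_le_one
        have hsq1 : (1 - f t) ^ 2 ≤ 1 := by nlinarith
        have habs : |t * (1 - f t) ^ 2| = t * (1 - f t) ^ 2 :=
          abs_of_nonneg (by positivity)
        rw [habs]
        nlinarith
      · have hft : f t = 1 := min_eq_right ((one_le_div hε).mpr hc.le)
        rw [hft]
        simp [hε.le]
    have h6 : ‖x - x * s‖ ^ 2 = ‖star (x - x * s) * (x - x * s)‖ := by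
      rw [CStarRing.norm_star_mul_self, sq]
    have h8 : D x ^ 2 ≤ ‖x - x * s‖ ^ 2 := pow_le_pow_left₀ (hDnonneg x) hDxle 2
    rw [h6] at h8
    exact h8.trans hbound
  have hD0 : D x ^ 2 ≤ 0 := by
    refine le_of_forall_pos_le_add fun ε hε => ?_
    simpa using hDx2 ε hε
  have hD0' : D x = 0 := by
    have := le_antisymm hD0 (sq_nonneg _)
    exact pow_eq_zero_iff two_ne_zero |>.mp this
  exact hmemD x hD0'
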